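/- With the notation of the previous statement, the value of F at the critical point is a quadratic polynomial in g: F(π*, φ₁*, φ₂*) = 𝔉₁g² + 𝔉₂g + 𝔉₃, where 𝔉₁ = σ²ρ²(1−γ−θ)²/(2(1−γ)(γ+θ)) − σ²θ/(2(1−γ)), 𝔉₂ = σρμ₂(1−γ−θ)/(γ+θ), and 𝔉₃ = (1−γ)μ₂²/(2(γ+θ)). -/

import Mathlib

open Set

/-- Value of the Hamiltonian `F` at its critical point, as a quadratic in `g`. -/
theorem stmt_8 (γ θ σ ρ μ₂ g : ℝ) (hγ : 0 < γ) (hγ1 : γ ≠ 1) (hθ : 0 < θ)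
    (hσ : 0 < σ) (hρ : ρ ∈ Set.Icc (-1 : ℝ) 1)
    (F : ℝ → ℝ → ℝ → ℝ)
    (hF : ∀ π φ₁ φ₂, F π φ₁ φ₂ =
      γ * (γ - 1) / 2 * π ^ 2 + σ * ρ * (1 - γ) * g * π + (1 - γ) * μ₂ * π +
      (1 - γ) * φ₁ * π + σ * ρ * φ₁ * g + σ * Real.sqrt (1 - ρ ^ 2) * φ₂ * g +
      (1 - γ) / (2 * θ) * φ₁ ^ 2 + (1 - γ) / (2 * θ) * φ₂ ^ 2)
    (πs φ₁s φ₂s : ℝ)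
    (hπs : πs = (σ * ρ * (1 - γ - θ) * g + μ₂ * (1 - γ)) / ((1 - γ) * (γ + θ)))
    (hφ₁s : φ₁s = -θ * (σ * ρ * g + μ₂ * (1 - γ)) / ((1 - γ) * (γ + θ)))
    (hφ₂s : φ₂s = -σ * θ * Real.sqrt (1 - ρ ^ 2) * g / (1 - γ)) :
    F πs φ₁s φ₂s =
      (σ ^ 2 * ρ ^ 2 * (1 - γ - θ) ^ 2 / (2 * (1 - γ) * (γ + θ)) -
        σ ^ 2 * θ / (2 * (1 - γ))) * g ^ 2 +
      (σ * ρ * μ₂ * (1 - γ - θ) / (γ + θ)) * g +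
      (1 - γ) * μ₂ ^ 2 / (2 * (γ + θ)) := by
  have h1γ : (1 : ℝ) - γ ≠ 0 := sub_ne_zero.mpr (Ne.symm hγ1)
  have hγθ : γ + θ ≠ 0 := by positivity
  have hθ' : θ ≠ 0 := hθ.ne'
  have hK : (2 * θ * ((1 - γ) * (γ + θ)) ^ 2) ≠ 0 := by positivity
  have hs : Real.sqrt (1 - ρ ^ 2) ^ 2 = 1 - ρ ^ 2 := by
    rw [Real.sq_sqrt]
    nlinarith [hρ.1, hρ.2]
  rw [hF, hπs, hφ₁s, hφ₂s]
  have t0 : γ * (γ - 1) / 2 * ((σ * ρ * (1 - γ - θ) * g + μ₂ * (1 - γ)) / ((1 - γ) * (γ + θ))) ^ 2 = (θ * γ * (γ - 1) * (σ * ρ * (1 - γ - θ) * g + μ₂ * (1 - γ)) ^ 2) / (2 * θ * ((1 - γ) * (γ + θ)) ^ 2) := by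
    field_simp
  have t1 : σ * ρ * (1 - γ) * g * ((σ * ρ * (1 - γ - θ) * g + μ₂ * (1 - γ)) / ((1 - γ) * (γ + θ))) = (2 * θ * σ * ρ * (1 - γ) * g * (σ * ρ * (1 - γ - θ) * g + μ₂ * (1 - γ)) * ((1 - γ) * (γ + θ))) / (2 * θ * ((1 - γ) * (γ + θ)) ^ 2) := by
    field_simp
  have t2 : (1 - γ) * μ₂ * ((σ * ρ * (1 - γ - θ) * g + μ₂ * (1 - γ)) / ((1 - γ) * (γ + θ))) = (2 * θ * (1 - γ) * μ₂ * (σ * ρ * (1 - γ - θ) * g + μ₂ * (1 - γ)) * ((1 - γ) * (γ + θ))) / (2 * θ * ((1 - γ) * (γ + θ)) ^ 2) := by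
    field_simp
  have t3 : (1 - γ) * (-θ * (σ * ρ * g + μ₂ * (1 - γ)) / ((1 - γ) * (γ + θ))) * ((σ * ρ * (1 - γ - θ) * g + μ₂ * (1 - γ)) / ((1 - γ) * (γ + θ))) = (-2 * θ ^ 2 * (1 - γ) * (σ * ρ * g + μ₂ * (1 - γ)) * (σ * ρ * (1 - γ - θ) * g + μ₂ * (1 - γ))) / (2 * θ * ((1 - γ) * (γ + θ)) ^ 2) := by
    field_simp
  have t4 : σ * ρ * (-θ * (σ * ρ * g + μ₂ * (1 - γ)) / ((1 - γ) * (γ + θ))) * g = (-2 * θ ^ 2 * σ * ρ * (σ * ρ * g + μ₂ * (1 - γ)) * g * ((1 - γ) * (γ + θ))) / (2 * θ * ((1 - γ) * (γ + θ)) ^ 2) := by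
    field_simp
  have t5 : σ * Real.sqrt (1 - ρ ^ 2) * (-σ * θ * Real.sqrt (1 - ρ ^ 2) * g / (1 - γ)) * g = (-2 * σ ^ 2 * θ ^ 2 * (1 - ρ ^ 2) * g ^ 2 * (1 - γ) * (γ + θ) ^ 2) / (2 * θ * ((1 - γ) * (γ + θ)) ^ 2) := by
    rw [show (σ * Real.sqrt (1 - ρ ^ 2) * (-σ * θ * Real.sqrt (1 - ρ ^ 2) * g / (1 - γ)) * g) = -(σ ^ 2 * θ * g ^ 2) / (1 - γ) * Real.sqrt (1 - ρ ^ 2) ^ 2 from by ring, hs]; field_simp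
  have t6 : (1 - γ) / (2 * θ) * (-θ * (σ * ρ * g + μ₂ * (1 - γ)) / ((1 - γ) * (γ + θ))) ^ 2 = (θ ^ 2 * (1 - γ) * (σ * ρ * g + μ₂ * (1 - γ)) ^ 2) / (2 * θ * ((1 - γ) * (γ + θ)) ^ 2) := by
    field_simp
  have t7 : (1 - γ) / (2 * θ) * (-σ * θ * Real.sqrt (1 - ρ ^ 2) * g / (1 - γ)) ^ 2 = (σ ^ 2 * θ ^ 2 * (1 - ρ ^ 2) * g ^ 2 * (1 - γ) * (γ + θ) ^ 2) / (2 * θ * ((1 - γ) * (γ + θ)) ^ 2) := by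
    rw [show ((1 - γ) / (2 * θ) * (-σ * θ * Real.sqrt (1 - ρ ^ 2) * g / (1 - γ)) ^ 2) = (1 - γ) / (2 * θ) * (σ * θ * g / (1 - γ)) ^ 2 * Real.sqrt (1 - ρ ^ 2) ^ 2 from by ring, hs]; field_simp
  have r0 : (σ ^ 2 * ρ ^ 2 * (1 - γ - θ) ^ 2 / (2 * (1 - γ) * (γ + θ)) - σ ^ 2 * θ / (2 * (1 - γ))) * g ^ 2 = ((σ ^ 2 * ρ ^ 2 * (1 - γ - θ) ^ 2 * θ * (1 - γ) * (γ + θ) - σ ^ 2 * θ ^ 2 * (1 - γ) * (γ + θ) ^ 2) * g ^ 2) / (2 * θ * ((1 - γ) * (γ + θ)) ^ 2) := by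
    field_simp
  have r1 : σ * ρ * μ₂ * (1 - γ - θ) / (γ + θ) * g = (2 * θ * σ * ρ * μ₂ * (1 - γ - θ) * (1 - γ) ^ 2 * (γ + θ) * g) / (2 * θ * ((1 - γ) * (γ + θ)) ^ 2) := by
    field_simp
  have r2 : (1 - γ) * μ₂ ^ 2 / (2 * (γ + θ)) = (θ * (1 - γ) ^ 3 * (γ + θ) * μ₂ ^ 2) / (2 * θ * ((1 - γ) * (γ + θ)) ^ 2) := by
    field_simp
  rw [t0, t1, t2, t3, t4, t5, t6, t7, r0, r1, r2]
  rw [← add_div, ← add_div, ← add_div, ← add_div, ← add_div, ← add_div, ← add_div, ← add_div, ← add_div]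
  rw [div_eq_div_iff hK hK]
  ring
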